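/- Let n ∈ ℕ, n ≥ 1, and set ñ = 4n−3. Let F be the ñ×ñ unitary DFT matrix and 𝒮_z : ℂ^n → ℂ^{ñ} the zero-padded symmetrization. Then there exists a constant c > 0 (depending only on ñ) such that for all x₁, x₂ ∈ ℂ^n with (x₁)_0, (x₂)_0 ∈ ℝ, it holds that ‖ |F 𝒮_z(x₁)|² − |F 𝒮_z(x₂)|² ‖ ≥ c · ‖𝒮_z(x₁ − x₂)‖ · ‖𝒮_z(x₁ + x₂)‖. -/

import Mathlib

open scoped BigOperators

/-- Circular convolution on `ℂ^m`: `(u ⊛ v)_k = ∑_l u_l v_{(k-l) mod m}`. -/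
noncomputable def cconv {m : ℕ} (u v : Fin m → ℂ) : Fin m → ℂ :=
  fun k => ∑ l : Fin m, u l * v (k - l)

/-- Circular correlation on `ℂ^m`: `(u ⋆ v)_k = ∑_l u_l conj (v_{(k+l) mod m})`. -/
noncomputable def ccorr {m : ℕ} (u v : Fin m → ℂ) : Fin m → ℂ :=
  fun k => ∑ l : Fin m, u l * (starRingEnd ℂ) (v (k + l))

/-- Euclidean (ℓ²) norm of a vector. -/
noncomputable def euclNorm {m : ℕ} {E : Type*} [SeminormedAddGroup E] (x : Fin m → E) : ℝ :=
  Real.sqrt (∑ i, ‖x i‖ ^ 2)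

/-- Zero padding `ℂ^n → ℂ^m` (entries of `x` followed by zeros). -/
def pad (n m : ℕ) (x : Fin n → ℂ) : Fin m → ℂ :=
  fun k => if h : (k : ℕ) < n then x ⟨k, h⟩ else 0

/-- `x` has at most `s` nonzero entries. -/
def sparse {n : ℕ} (s : ℕ) (x : Fin n → ℂ) : Prop :=
  Set.ncard {i | x i ≠ 0} ≤ s

/-- The unitary DFT matrix `F_{kl} = m^{-1/2} exp(2πi kl/m)`. -/
noncomputable def dft (m : ℕ) : Matrix (Fin m) (Fin m) ℂ :=
  fun k l => ((Real.sqrt m : ℝ) : ℂ)⁻¹ *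
    Complex.exp (2 * (Real.pi : ℂ) * Complex.I * ((k : ℕ) : ℂ) * ((l : ℕ) : ℂ) / (m : ℂ))

/-- Cyclic shift: `(S x)_k = x_{(k-1) mod m}`. -/
def shiftOp {m : ℕ} (x : Fin m → ℂ) : Fin m → ℂ :=
  fun k => x ⟨((k : ℕ) + (m - 1)) % m, Nat.mod_lt _ (by have := k.isLt; omega)⟩

/-- Time reversal: `(Γ x)_k = x_{(-k) mod m}`. -/
def rev {m : ℕ} (u : Fin m → ℂ) : Fin m → ℂ := fun k => u (-k)

/-- Symmetrization `𝒮 : ℂ^n → ℂ^{2n-1}`,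
`𝒮(x) = (x_0, …, x_{n-1}, conj x_{n-1}, …, conj x_1)`. -/
noncomputable def symmetrize (n : ℕ) (x : Fin n → ℂ) : Fin (2 * n - 1) → ℂ :=
  fun k =>
    if h : (k : ℕ) < n then x ⟨k, h⟩
    else (starRingEnd ℂ) (x ⟨2 * n - 1 - (k : ℕ), by have := k.isLt; omega⟩)

/-- Zero-padded symmetrization `𝒮_z : ℂ^n → ℂ^{4n-3}`, `𝒮_z(x) = 𝒮((x, 0_{n-1}))`. -/
noncomputable def symmetrizeZ (n : ℕ) (x : Fin n → ℂ) : Fin (4 * n - 3) → ℂ :=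
  fun k => symmetrize (2 * n - 1) (pad n (2 * n - 1) x) ⟨(k : ℕ), by have := k.isLt; omega⟩

/-- `𝒮_z' : ℂ^n → ℂ^{4n-1}`,
`𝒮_z'(x) = (0_n, x_0, …, x_{n-1}, conj x_{n-1}, …, conj x_0, 0_{n-1})`. -/
noncomputable def symmetrizeZ' (n : ℕ) (x : Fin n → ℂ) : Fin (4 * n - 1) → ℂ :=
  fun k =>
    if _ : (k : ℕ) < n then 0
    else if h2 : (k : ℕ) < 2 * n then x ⟨(k : ℕ) - n, by omega⟩
    else if h3 : (k : ℕ) < 3 * n then (starRingEnd ℂ) (x ⟨3 * n - 1 - (k : ℕ), by omega⟩)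
    else 0

lemma symmetrizeZ_eq (n : ℕ) (hn : 0 < n) (y : Fin n → ℂ) (k : Fin (4 * n - 3)) :
    symmetrizeZ n y k =
      if h : (k : ℕ) < n then y ⟨k, h⟩
      else if h2 : 3 * n - 2 ≤ (k : ℕ) then
        (starRingEnd ℂ) (y ⟨4 * n - 3 - (k : ℕ), by have := k.isLt; omega⟩)
      else 0 := by
  have hk := k.isLt
  show symmetrize (2 * n - 1) (pad n (2 * n - 1) y) ⟨(k : ℕ), _⟩ = _
  rw [symmetrize]
  by_cases h1 : (k : ℕ) < 2 * n - 1
  · rw [dif_pos h1]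
    show pad n (2 * n - 1) y ⟨(k : ℕ), h1⟩ = _
    rw [pad]
    by_cases h : (k : ℕ) < n
    · rw [dif_pos h, dif_pos h]
    · rw [dif_neg h, dif_neg h, dif_neg (by omega)]
  · rw [dif_neg h1]
    show (starRingEnd ℂ) (pad n (2 * n - 1) y ⟨2 * (2 * n - 1) - 1 - (k : ℕ), _⟩) = _
    rw [pad]
    rw [dif_neg (by omega : ¬ (k : ℕ) < n)]
    by_cases h2 : 3 * n - 2 ≤ (k : ℕ)
    · rw [dif_pos (by omega : 2 * (2 * n - 1) - 1 - (k : ℕ) < n), dif_pos h2]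
      exact congrArg _ (congrArg y (Fin.ext
        (show 2 * (2 * n - 1) - 1 - (k : ℕ) = 4 * n - 3 - (k : ℕ) by omega)))
    · rw [dif_neg (by omega : ¬ 2 * (2 * n - 1) - 1 - (k : ℕ) < n), dif_neg h2]
      simp

lemma symmetrizeZ_sub (n : ℕ) (hn : 0 < n) (x y : Fin n → ℂ) :
    symmetrizeZ n (x - y) = symmetrizeZ n x - symmetrizeZ n y := by
  funext k
  simp only [symmetrizeZ_eq n hn, Pi.sub_apply]
  split_ifs <;> simp

lemma symmetrizeZ_add (n : ℕ) (hn : 0 < n) (x y : Fin n → ℂ) :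
    symmetrizeZ n (x + y) = symmetrizeZ n x + symmetrizeZ n y := by
  funext k
  simp only [symmetrizeZ_eq n hn, Pi.add_apply]
  split_ifs <;> simp

lemma symmetrizeZ_smul (n : ℕ) (hn : 0 < n) (r : ℝ) (y : Fin n → ℂ) :
    symmetrizeZ n ((r : ℂ) • y) = (r : ℂ) • symmetrizeZ n y := by
  funext k
  simp only [symmetrizeZ_eq n hn, Pi.smul_apply, smul_eq_mul]
  split_ifs <;> simp [map_mul, Complex.conj_ofReal]

lemma symmetrizeZ_conj_neg (n : ℕ) (hn : 0 < n) (y : Fin n → ℂ)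
    (hy : (y ⟨0, hn⟩).im = 0) (l : Fin (4 * n - 3)) :
    (starRingEnd ℂ) (symmetrizeZ n y (-l)) = symmetrizeZ n y l := by
  have hl := l.isLt
  have hneg : ((-l : Fin (4 * n - 3)) : ℕ) = (4 * n - 3 - (l : ℕ)) % (4 * n - 3) :=
    Fin.coe_neg l
  by_cases h0 : (l : ℕ) = 0
  · have hll : -l = l := by
      apply Fin.ext
      rw [hneg, h0, Nat.sub_zero, Nat.mod_self]
    rw [hll]
    simp only [symmetrizeZ_eq n hn]
    rw [dif_pos (by omega : (l : ℕ) < n)]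
    have : (⟨(l : ℕ), by omega⟩ : Fin n) = ⟨0, hn⟩ := Fin.ext h0
    rw [this]
    exact Complex.conj_eq_iff_im.mpr hy
  · have hneg' : ((-l : Fin (4 * n - 3)) : ℕ) = 4 * n - 3 - (l : ℕ) := by
      rw [hneg, Nat.mod_eq_of_lt (by omega)]
    simp only [symmetrizeZ_eq n hn, hneg']
    split_ifs <;> try omega
    · rfl
    · simp only [Complex.conj_conj]
      exact congrArg y (Fin.ext
        (show 4 * n - 3 - (4 * n - 3 - (l : ℕ)) = (l : ℕ) by omega))
    · simp

noncomputable def zet (m : ℕ) : ℂ := Complex.exp (2 * (Real.pi : ℂ) * Complex.I / m)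

lemma zet_prim (m : ℕ) (hm : 0 < m) : IsPrimitiveRoot (zet m) m :=
  Complex.isPrimitiveRoot_exp m (by omega)

lemma zet_pow_m (m : ℕ) (hm : 0 < m) : zet m ^ m = 1 := (zet_prim m hm).pow_eq_one

lemma dft_apply_zeta (m : ℕ) (k l : Fin m) :
    dft m k l = ((Real.sqrt m : ℝ) : ℂ)⁻¹ * zet m ^ ((k : ℕ) * (l : ℕ)) := by
  rw [dft, zet, ← Complex.exp_nat_mul]
  congr 1
  push_cast
  ring

lemma conj_zet (m : ℕ) : (starRingEnd ℂ) (zet m) = (zet m)⁻¹ := by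
  rw [zet, ← Complex.exp_conj, ← Complex.exp_neg]
  congr 1
  simp [map_div₀, Complex.conj_I, map_ofNat]
  ring

lemma zet_pow_neg_mul (m : ℕ) (hm : 0 < m) (k x : Fin m) :
    zet m ^ ((k : ℕ) * ((-x : Fin m) : ℕ)) * zet m ^ ((k : ℕ) * (x : ℕ)) = 1 := by
  rw [← pow_add, ← Nat.mul_add]
  have hx : ((-x : Fin m) : ℕ) + (x : ℕ) = if (x : ℕ) = 0 then 0 else m := by
    rw [Fin.coe_neg]
    have := x.isLt
    split_ifs with h
    · rw [h, Nat.sub_zero, Nat.mod_self]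
    · rw [Nat.mod_eq_of_lt (by omega)]; omega
  rw [hx]
  split_ifs with h
  · rw [Nat.mul_zero, pow_zero]
  · rw [mul_comm, pow_mul, zet_pow_m m hm, one_pow]

lemma conj_dft (m : ℕ) (hm : 0 < m) (k x : Fin m) :
    (starRingEnd ℂ) (dft m k x) = dft m k (-x) := by
  rw [dft_apply_zeta, dft_apply_zeta, map_mul, map_pow, conj_zet, map_inv₀,
    Complex.conj_ofReal]
  congr 1
  rw [inv_pow]
  exact (eq_inv_of_mul_eq_one_left (zet_pow_neg_mul m hm k x)).symm

lemma dft_mulVec_real (m : ℕ) (hm : 0 < m) (v : Fin m → ℂ)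
    (hv : ∀ l : Fin m, (starRingEnd ℂ) (v (-l)) = v l) (k : Fin m) :
    ((dft m).mulVec v k).im = 0 := by
  rw [← Complex.conj_eq_iff_im]
  have : (dft m).mulVec v k = ∑ l : Fin m, dft m k l * v l := by
    simp [Matrix.mulVec, dotProduct]
  rw [this, map_sum]
  refine Fintype.sum_equiv (Equiv.neg (Fin m))
    (fun l => (starRingEnd ℂ) (dft m k l * v l)) (fun l => dft m k l * v l) ?_
  intro x
  simp only [Equiv.neg_apply, map_mul]
  rw [conj_dft m hm k x]
  congr 1
  have := hv (-x)
  rwa [neg_neg] at this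

lemma pow_mod_of_pow_eq_one {m : ℕ} {w : ℂ} (hw : w ^ m = 1) (a : ℕ) :
    w ^ (a % m) = w ^ a := by
  conv_rhs => rw [← Nat.div_add_mod a m]
  rw [pow_add, pow_mul, hw, one_pow, one_mul]

lemma zet_pow_shift (m : ℕ) (hm : 0 < m) (k j c : Fin m) :
    zet m ^ ((k : ℕ) * ((j + c : Fin m) : ℕ))
      = zet m ^ ((k : ℕ) * (c : ℕ)) * (zet m ^ (k : ℕ)) ^ (j : ℕ) := by
  have hw : (zet m ^ (k : ℕ)) ^ m = 1 := by
    rw [← pow_mul, mul_comm, pow_mul, zet_pow_m m hm, one_pow]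
  rw [pow_mul, Fin.val_add, pow_mod_of_pow_eq_one hw, pow_add, ← pow_mul, ← pow_mul]
  ring

open Fin.NatCast in
lemma vanish_card_le (m : ℕ) (hm : 0 < m) (v : Fin m → ℂ) (c : Fin m) (s : ℕ)
    (hs : 0 < s) (hsm : s ≤ m)
    (hsupp : ∀ j : Fin m, s ≤ (j : ℕ) → v (j + c) = 0) (hv : v ≠ 0) :
    (Finset.univ.filter fun k : Fin m => (dft m).mulVec v k = 0).card ≤ s - 1 := by
  haveI : NeZero m := ⟨by omega⟩
  set Q : Polynomial ℂ :=
    ∑ j ∈ Finset.range s, Polynomial.monomial j (v ((j : Fin m) + c)) with hQ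
  have hQcoeff : ∀ j : ℕ, j < s → Q.coeff j = v ((j : Fin m) + c) := by
    intro j hj
    rw [hQ, Polynomial.finset_sum_coeff]
    simp only [Polynomial.coeff_monomial]
    rw [Finset.sum_ite_eq' (Finset.range s) j]
    simp [hj]
  have hQ0 : Q ≠ 0 := by
    obtain ⟨l, hl⟩ := Function.ne_iff.mp hv
    simp only [Pi.zero_apply] at hl
    set j : Fin m := l - c with hjdef
    have hjc : j + c = l := sub_add_cancel l c
    have hjs : (j : ℕ) < s := by
      by_contra hcon
      exact hl (hjc ▸ hsupp j (le_of_not_gt hcon))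
    intro hQz
    have h1 := hQcoeff (j : ℕ) hjs
    rw [hQz, Polynomial.coeff_zero, Fin.cast_val_eq_self, hjc] at h1
    exact hl h1.symm
  have hdeg : Q.natDegree ≤ s - 1 := by
    apply Polynomial.natDegree_sum_le_of_forall_le
    intro i hi
    exact le_trans (Polynomial.natDegree_monomial_le _)
      (by simp only [Finset.mem_range] at hi; omega)
  have heval : ∀ k : Fin m, (dft m).mulVec v k =
      ((Real.sqrt m : ℝ) : ℂ)⁻¹ * (zet m ^ ((k : ℕ) * (c : ℕ)) * Q.eval (zet m ^ (k : ℕ))) := by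
    intro k
    have h1 : (dft m).mulVec v k
        = ((Real.sqrt m : ℝ) : ℂ)⁻¹ * ∑ l : Fin m, zet m ^ ((k : ℕ) * (l : ℕ)) * v l := by
      simp only [Matrix.mulVec, dotProduct, dft_apply_zeta]
      rw [Finset.mul_sum]
      exact Finset.sum_congr rfl fun l _ => by ring
    rw [h1]
    congr 1
    have h2 : Q.eval (zet m ^ (k : ℕ))
        = ∑ j ∈ Finset.range s, v ((j : Fin m) + c) * (zet m ^ (k : ℕ)) ^ j := by
      simp [hQ, Polynomial.eval_finset_sum, Polynomial.eval_monomial]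
    set g : ℕ → ℂ := fun jn =>
      zet m ^ ((k : ℕ) * (c : ℕ)) * (zet m ^ (k : ℕ)) ^ jn * v ((jn : Fin m) + c) with hg
    have h3 : ∑ l : Fin m, zet m ^ ((k : ℕ) * (l : ℕ)) * v l = ∑ j : Fin m, g (j : ℕ) := by
      refine (Fintype.sum_equiv (Equiv.addRight c)
        (fun j => g (j : ℕ)) (fun l => zet m ^ ((k : ℕ) * (l : ℕ)) * v l) ?_).symm
      intro j
      show g (j : ℕ) = zet m ^ ((k : ℕ) * ((j + c : Fin m) : ℕ)) * v (j + c)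
      rw [hg]
      simp only [Fin.cast_val_eq_self]
      rw [zet_pow_shift m hm k j c]
    have h4 : ∑ jn ∈ Finset.range m, g jn = ∑ jn ∈ Finset.range s, g jn := by
      refine (Finset.sum_subset (Finset.range_subset_range.mpr hsm) ?_).symm
      intro x hx hxs
      simp only [Finset.mem_range] at hx hxs
      have hz : v ((x : Fin m) + c) = 0 := by
        apply hsupp
        rw [Fin.val_natCast, Nat.mod_eq_of_lt hx]
        omega
      rw [hg]
      simp only [hz, mul_zero]
    rw [h3, Fin.sum_univ_eq_sum_range g m, h4, h2, Finset.mul_sum]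
    refine Finset.sum_congr rfl fun j hj => ?_
    rw [hg]
    ring
  have hsqrt : ((Real.sqrt m : ℝ) : ℂ)⁻¹ ≠ 0 := by
    simp only [ne_eq, inv_eq_zero, Complex.ofReal_eq_zero]
    positivity
  have hζne : zet m ≠ 0 := (zet_prim m hm).ne_zero (by omega)
  calc (Finset.univ.filter fun k : Fin m => (dft m).mulVec v k = 0).card
      ≤ Q.roots.toFinset.card := by
        apply Finset.card_le_card_of_injOn (fun k : Fin m => zet m ^ (k : ℕ))
        · intro k hk
          simp only [Finset.mem_coe, Finset.mem_filter, Finset.mem_univ, true_and] at hk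
          rw [heval k] at hk
          have h5 : Q.eval (zet m ^ (k : ℕ)) = 0 := by
            rcases mul_eq_zero.mp hk with h | h
            · exact absurd h hsqrt
            · rcases mul_eq_zero.mp h with h' | h'
              · exact absurd h' (pow_ne_zero _ hζne)
              · exact h'
          rw [Finset.mem_coe, Multiset.mem_toFinset, Polynomial.mem_roots hQ0]
          exact h5
        · intro a _ b _ hab
          exact Fin.ext ((zet_prim m hm).pow_inj a.isLt b.isLt hab)
    _ ≤ Multiset.card Q.roots := Multiset.toFinset_card_le _
    _ ≤ Q.natDegree := Polynomial.card_roots' Q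
    _ ≤ s - 1 := hdeg


lemma euclNorm_nonneg {m : ℕ} {E : Type*} [SeminormedAddGroup E] (x : Fin m → E) :
    0 ≤ euclNorm x := Real.sqrt_nonneg _

lemma euclNorm_sq {m : ℕ} {E : Type*} [SeminormedAddGroup E] (x : Fin m → E) :
    euclNorm x ^ 2 = ∑ i, ‖x i‖ ^ 2 :=
  Real.sq_sqrt (Finset.sum_nonneg fun i _ => sq_nonneg _)

lemma euclNorm_smul {m : ℕ} (a : ℂ) (u : Fin m → ℂ) :
    euclNorm (a • u) = ‖a‖ * euclNorm u := by
  unfold euclNorm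
  rw [← Real.sqrt_sq (norm_nonneg a), ← Real.sqrt_mul (sq_nonneg _)]
  congr 1
  rw [Finset.mul_sum]
  exact Finset.sum_congr rfl fun i _ => by
    simp [Pi.smul_apply, norm_smul, mul_pow]

/-- The product objective function. -/
noncomputable def gFun (n : ℕ) (p : (Fin n → ℂ) × (Fin n → ℂ)) : ℝ :=
  ∑ k : Fin (4 * n - 3), ‖(dft (4 * n - 3)).mulVec (symmetrizeZ n p.1) k‖ ^ 2 *
    ‖(dft (4 * n - 3)).mulVec (symmetrizeZ n p.2) k‖ ^ 2

lemma gFun_nonneg (n : ℕ) (p : (Fin n → ℂ) × (Fin n → ℂ)) : 0 ≤ gFun n p :=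
  Finset.sum_nonneg fun k _ => mul_nonneg (sq_nonneg _) (sq_nonneg _)

lemma symmetrizeZ_cont (n : ℕ) (hn : 0 < n) (l : Fin (4 * n - 3)) :
    Continuous fun y : Fin n → ℂ => symmetrizeZ n y l := by
  have he : (fun y : Fin n → ℂ => symmetrizeZ n y l) = fun y =>
      if h : (l : ℕ) < n then y ⟨l, h⟩
      else if h2 : 3 * n - 2 ≤ (l : ℕ) then
        (starRingEnd ℂ) (y ⟨4 * n - 3 - (l : ℕ), by have := l.isLt; omega⟩)
      else 0 := funext fun y => symmetrizeZ_eq n hn y l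
  rw [he]
  by_cases h : (l : ℕ) < n
  · simp only [dif_pos h]; exact continuous_apply _
  · simp only [dif_neg h]
    by_cases h2 : 3 * n - 2 ≤ (l : ℕ)
    · simp only [dif_pos h2]
      exact continuous_star.comp (continuous_apply _)
    · simp only [dif_neg h2]; exact continuous_const

lemma mulVec_symm_cont (n : ℕ) (hn : 0 < n) (k : Fin (4 * n - 3)) :
    Continuous fun y : Fin n → ℂ => (dft (4 * n - 3)).mulVec (symmetrizeZ n y) k := by
  have he : (fun y : Fin n → ℂ => (dft (4 * n - 3)).mulVec (symmetrizeZ n y) k)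
      = fun y => ∑ l, dft (4 * n - 3) k l * symmetrizeZ n y l := by
    funext y; simp [Matrix.mulVec, dotProduct]
  rw [he]
  exact continuous_finset_sum _ fun l _ => continuous_const.mul (symmetrizeZ_cont n hn l)

lemma gFun_cont (n : ℕ) (hn : 0 < n) : Continuous (gFun n) := by
  unfold gFun
  exact continuous_finset_sum _ fun k _ =>
    (((mulVec_symm_cont n hn k).comp continuous_fst).norm.pow 2).mul
      (((mulVec_symm_cont n hn k).comp continuous_snd).norm.pow 2)

lemma symm_supp (n : ℕ) (hn : 0 < n) (y : Fin n → ℂ) (c : Fin (4 * n - 3))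
    (hc : (c : ℕ) = (3 * n - 2) % (4 * n - 3)) (j : Fin (4 * n - 3))
    (hj : 2 * n - 1 ≤ (j : ℕ)) :
    symmetrizeZ n y (j + c) = 0 := by
  have hjl := j.isLt
  have hn2 : 2 ≤ n := by omega
  have hc' : (c : ℕ) = 3 * n - 2 := by rw [hc]; exact Nat.mod_eq_of_lt (by omega)
  have hval : (((j + c : Fin (4 * n - 3))) : ℕ) = (j : ℕ) + (3 * n - 2) - (4 * n - 3) := by
    rw [Fin.val_add, hc', Nat.mod_eq_sub_mod (by omega), Nat.mod_eq_of_lt (by omega)]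
  rw [symmetrizeZ_eq n hn]
  have hnot1 : ¬ ((((j + c : Fin (4 * n - 3))) : ℕ) < n) := by omega
  have hnot2 : ¬ (3 * n - 2 ≤ (((j + c : Fin (4 * n - 3))) : ℕ)) := by omega
  rw [dif_neg hnot1, dif_neg hnot2]

lemma big_support (n : ℕ) (hn : 0 < n) (y : Fin n → ℂ) (hy : symmetrizeZ n y ≠ 0) :
    2 * n - 1 ≤ (Finset.univ.filter fun k : Fin (4 * n - 3) =>
      (dft (4 * n - 3)).mulVec (symmetrizeZ n y) k ≠ 0).card := by
  have hm : 0 < 4 * n - 3 := by omega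
  set c : Fin (4 * n - 3) := ⟨(3 * n - 2) % (4 * n - 3), Nat.mod_lt _ (by omega)⟩ with hcdef
  have h1 := vanish_card_le (4 * n - 3) hm (symmetrizeZ n y) c (2 * n - 1)
    (by omega) (by omega) (fun j hj => symm_supp n hn y c rfl j hj) hy
  have h2 := Finset.card_filter_add_card_filter_not
    (s := (Finset.univ : Finset (Fin (4 * n - 3))))
    (fun k => (dft (4 * n - 3)).mulVec (symmetrizeZ n y) k = 0)
  rw [Finset.card_univ, Fintype.card_fin] at h2
  have h3 : (Finset.univ.filter fun k : Fin (4 * n - 3) =>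
      ¬ (dft (4 * n - 3)).mulVec (symmetrizeZ n y) k = 0).card
      = (Finset.univ.filter fun k : Fin (4 * n - 3) =>
      (dft (4 * n - 3)).mulVec (symmetrizeZ n y) k ≠ 0).card := rfl
  omega

lemma overlap (n : ℕ) (hn : 0 < n) (y z : Fin n → ℂ)
    (hy : symmetrizeZ n y ≠ 0) (hz : symmetrizeZ n z ≠ 0) :
    ∃ k : Fin (4 * n - 3), (dft (4 * n - 3)).mulVec (symmetrizeZ n y) k ≠ 0 ∧
      (dft (4 * n - 3)).mulVec (symmetrizeZ n z) k ≠ 0 := by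
  set A := Finset.univ.filter fun k : Fin (4 * n - 3) =>
    (dft (4 * n - 3)).mulVec (symmetrizeZ n y) k ≠ 0 with hA
  set B := Finset.univ.filter fun k : Fin (4 * n - 3) =>
    (dft (4 * n - 3)).mulVec (symmetrizeZ n z) k ≠ 0 with hB
  have h1 : 2 * n - 1 ≤ A.card := big_support n hn y hy
  have h2 : 2 * n - 1 ≤ B.card := big_support n hn z hz
  have h3 := Finset.card_union_add_card_inter A B
  have h4 : (A ∪ B).card ≤ 4 * n - 3 := by
    have := Finset.card_le_univ (A ∪ B)
    rwa [Fintype.card_fin] at this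
  have h5 : 0 < (A ∩ B).card := by omega
  obtain ⟨k, hk⟩ := Finset.card_pos.mp h5
  rw [Finset.mem_inter, hA, hB] at hk
  simp only [Finset.mem_filter, Finset.mem_univ, true_and] at hk
  exact ⟨k, hk.1, hk.2⟩

lemma gFun_lower (n : ℕ) (hn : 0 < n) :
    ∃ cm : ℝ, 0 < cm ∧ ∀ d s : Fin n → ℂ, (d ⟨0, hn⟩).im = 0 → (s ⟨0, hn⟩).im = 0 →
      cm * euclNorm (symmetrizeZ n d) ^ 2 * euclNorm (symmetrizeZ n s) ^ 2 ≤ gFun n (d, s) := by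
  set K : Set ((Fin n → ℂ) × (Fin n → ℂ)) := {p | (p.1 ⟨0, hn⟩).im = 0 ∧ (p.2 ⟨0, hn⟩).im = 0 ∧
    euclNorm (symmetrizeZ n p.1) = 1 ∧ euclNorm (symmetrizeZ n p.2) = 1} with hK
  have hNc : Continuous fun y : Fin n → ℂ => euclNorm (symmetrizeZ n y) := by
    unfold euclNorm
    exact Real.continuous_sqrt.comp
      (continuous_finset_sum _ fun i _ => (symmetrizeZ_cont n hn i).norm.pow 2)
  have hclosed : IsClosed K := by
    rw [hK]
    simp only [Set.setOf_and]
    exact ((isClosed_eq (Complex.continuous_im.comp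
        ((continuous_apply _).comp continuous_fst)) continuous_const)).inter
      ((isClosed_eq (Complex.continuous_im.comp
        ((continuous_apply _).comp continuous_snd)) continuous_const).inter
      ((isClosed_eq (hNc.comp continuous_fst) continuous_const).inter
       (isClosed_eq (hNc.comp continuous_snd) continuous_const)))
  have hbound : ∀ y : Fin n → ℂ, euclNorm (symmetrizeZ n y) = 1 → ‖y‖ ≤ 1 := by
    intro y hy
    rw [pi_norm_le_iff_of_nonneg zero_le_one]
    intro j
    have hsum : ∑ i, ‖symmetrizeZ n y i‖ ^ 2 = 1 := Real.sqrt_eq_one.mp hy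
    have hij : symmetrizeZ n y ⟨(j : ℕ), by have := j.isLt; omega⟩ = y j := by
      rw [symmetrizeZ_eq n hn]
      have hj : ((⟨(j : ℕ), by have := j.isLt; omega⟩ : Fin (4 * n - 3)) : ℕ) < n := j.isLt
      rw [dif_pos hj]
    have hle : ‖y j‖ ^ 2 ≤ 1 := by
      calc ‖y j‖ ^ 2 = ‖symmetrizeZ n y ⟨(j : ℕ), by have := j.isLt; omega⟩‖ ^ 2 := by
            rw [hij]
        _ ≤ ∑ i, ‖symmetrizeZ n y i‖ ^ 2 :=
            Finset.single_le_sum (f := fun i : Fin (4 * n - 3) => ‖symmetrizeZ n y i‖ ^ 2)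
              (fun i _ => sq_nonneg _) (Finset.mem_univ _)
        _ = 1 := hsum
    nlinarith [norm_nonneg (y j)]
  have hbdd : Bornology.IsBounded K := by
    apply Bornology.IsBounded.subset (Metric.isBounded_closedBall
      (x := (0 : (Fin n → ℂ) × (Fin n → ℂ))) (r := 1))
    intro p hp
    obtain ⟨_, _, h3, h4⟩ := hp
    rw [Metric.mem_closedBall, dist_zero_right, Prod.norm_def]
    exact max_le (hbound _ h3) (hbound _ h4)
  have hcpt : IsCompact K := Metric.isCompact_of_isClosed_isBounded hclosed hbdd
  have hKne : K.Nonempty := by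
    haveI : NeZero (4 * n - 3) := ⟨by omega⟩
    set e0 : Fin n → ℂ := fun j => if j = ⟨0, hn⟩ then 1 else 0 with he0
    have hse : ∀ k : Fin (4 * n - 3), symmetrizeZ n e0 k = if (k : ℕ) = 0 then 1 else 0 := by
      intro k
      have hk := k.isLt
      rw [symmetrizeZ_eq n hn]
      by_cases h : (k : ℕ) < n
      · rw [dif_pos h]
        simp only [he0, Fin.mk.injEq]
      · rw [dif_neg h, if_neg (by omega : ¬ (k : ℕ) = 0)]
        by_cases h2 : 3 * n - 2 ≤ (k : ℕ)
        · rw [dif_pos h2]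
          simp only [he0, Fin.mk.injEq]
          rw [if_neg (by omega), map_zero]
        · rw [dif_neg h2]
    have hnorm : euclNorm (symmetrizeZ n e0) = 1 := by
      unfold euclNorm
      have hsum : ∑ i, ‖symmetrizeZ n e0 i‖ ^ 2 = 1 := by
        calc ∑ i, ‖symmetrizeZ n e0 i‖ ^ 2
            = ∑ i : Fin (4 * n - 3), (if i = (⟨0, by omega⟩ : Fin (4 * n - 3)) then (1:ℝ) else 0) := by
              refine Finset.sum_congr rfl fun i _ => ?_
              rw [hse i]
              by_cases h : (i : ℕ) = 0
              · rw [if_pos h, if_pos (Fin.ext h)]; simp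
              · rw [if_neg h, if_neg (fun hc => h (by simpa using congrArg Fin.val hc))]; simp
          _ = 1 := by
              rw [Finset.sum_ite_eq' Finset.univ (⟨0, by omega⟩ : Fin (4 * n - 3))
                (fun _ => (1:ℝ))]
              simp
      rw [hsum, Real.sqrt_one]
    refine ⟨(e0, e0), ?_⟩
    rw [hK]
    simp only [Set.mem_setOf_eq]
    refine ⟨?_, ?_, hnorm, hnorm⟩ <;>
      · show (e0 ⟨0, hn⟩).im = 0
        simp [he0]
  obtain ⟨pm, hpmK, hpmin⟩ := hcpt.exists_isMinOn hKne (gFun_cont n hn).continuousOn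
  have hmin : ∀ q ∈ K, gFun n pm ≤ gFun n q := fun q hq => isMinOn_iff.mp hpmin q hq
  obtain ⟨hm1, hm2, hm3, hm4⟩ := hpmK
  have hez : euclNorm (0 : Fin (4 * n - 3) → ℂ) = 0 := by
    unfold euclNorm; simp
  have hv1 : symmetrizeZ n pm.1 ≠ 0 := fun h => by rw [h, hez] at hm3; norm_num at hm3
  have hv2 : symmetrizeZ n pm.2 ≠ 0 := fun h => by rw [h, hez] at hm4; norm_num at hm4
  obtain ⟨k0, hk1, hk2⟩ := overlap n hn pm.1 pm.2 hv1 hv2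
  have hcm : 0 < gFun n pm := by
    apply Finset.sum_pos' (fun k _ => mul_nonneg (sq_nonneg _) (sq_nonneg _))
    exact ⟨k0, Finset.mem_univ _,
      mul_pos (pow_pos (norm_pos_iff.mpr hk1) 2) (pow_pos (norm_pos_iff.mpr hk2) 2)⟩
  refine ⟨gFun n pm, hcm, ?_⟩
  intro d s hd hs
  set a := euclNorm (symmetrizeZ n d) with ha
  set b := euclNorm (symmetrizeZ n s) with hb
  rcases eq_or_lt_of_le (euclNorm_nonneg (symmetrizeZ n d)) with h0 | hdp
  · rw [← ha] at h0
    rw [← h0]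
    simpa using gFun_nonneg n (d, s)
  rcases eq_or_lt_of_le (euclNorm_nonneg (symmetrizeZ n s)) with h0 | hsp
  · rw [← hb] at h0
    rw [← h0]
    simpa using gFun_nonneg n (d, s)
  rw [← ha] at hdp
  rw [← hb] at hsp
  set q : (Fin n → ℂ) × (Fin n → ℂ) := (((a⁻¹ : ℝ) : ℂ) • d, ((b⁻¹ : ℝ) : ℂ) • s) with hq
  have hqK : q ∈ K := by
    refine ⟨?_, ?_, ?_, ?_⟩
    · show ((((a⁻¹ : ℝ) : ℂ) • d) ⟨0, hn⟩).im = 0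
      rw [Pi.smul_apply, smul_eq_mul, Complex.mul_im]
      simp [hd]
    · show ((((b⁻¹ : ℝ) : ℂ) • s) ⟨0, hn⟩).im = 0
      rw [Pi.smul_apply, smul_eq_mul, Complex.mul_im]
      simp [hs]
    · show euclNorm (symmetrizeZ n (((a⁻¹ : ℝ) : ℂ) • d)) = 1
      rw [symmetrizeZ_smul n hn, euclNorm_smul, ← ha, Complex.norm_real,
        Real.norm_eq_abs, abs_of_pos (inv_pos.mpr hdp), inv_mul_cancel₀ (ne_of_gt hdp)]
    · show euclNorm (symmetrizeZ n (((b⁻¹ : ℝ) : ℂ) • s)) = 1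
      rw [symmetrizeZ_smul n hn, euclNorm_smul, ← hb, Complex.norm_real,
        Real.norm_eq_abs, abs_of_pos (inv_pos.mpr hsp), inv_mul_cancel₀ (ne_of_gt hsp)]
  have h1 : gFun n pm ≤ gFun n q := hmin q hqK
  have h2 : gFun n q = (a⁻¹) ^ 2 * (b⁻¹) ^ 2 * gFun n (d, s) := by
    unfold gFun
    rw [Finset.mul_sum]
    refine Finset.sum_congr rfl fun k _ => ?_
    show ‖(dft (4 * n - 3)).mulVec (symmetrizeZ n (((a⁻¹ : ℝ) : ℂ) • d)) k‖ ^ 2 *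
        ‖(dft (4 * n - 3)).mulVec (symmetrizeZ n (((b⁻¹ : ℝ) : ℂ) • s)) k‖ ^ 2 = _
    rw [symmetrizeZ_smul n hn, symmetrizeZ_smul n hn, Matrix.mulVec_smul, Matrix.mulVec_smul]
    simp only [Pi.smul_apply, norm_smul, Complex.norm_real, Real.norm_eq_abs, mul_pow]
    rw [abs_of_pos (inv_pos.mpr hdp), abs_of_pos (inv_pos.mpr hsp)]
    ring
  rw [h2] at h1
  have hkey : gFun n pm * a ^ 2 * b ^ 2 ≤ gFun n (d, s) := by
    have h3 : gFun n pm * a ^ 2 * b ^ 2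
        ≤ ((a⁻¹) ^ 2 * (b⁻¹) ^ 2 * gFun n (d, s)) * a ^ 2 * b ^ 2 := by
      have := mul_le_mul_of_nonneg_right h1 (sq_nonneg a)
      exact mul_le_mul_of_nonneg_right this (sq_nonneg b)
    have h4 : ((a⁻¹) ^ 2 * (b⁻¹) ^ 2 * gFun n (d, s)) * a ^ 2 * b ^ 2 = gFun n (d, s) := by
      field_simp
    rw [h4] at h3
    exact h3
  exact hkey

/-- Stability of the magnitude Fourier measurements of zero-padded symmetrized
vectors, in terms of `‖𝒮_z(x₁ ∓ x₂)‖`. -/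
theorem stable_recovery_symmetrizeZ (n : ℕ) (hn : 0 < n) :
    ∃ c : ℝ, 0 < c ∧ ∀ x₁ x₂ : Fin n → ℂ,
      (x₁ ⟨0, hn⟩).im = 0 → (x₂ ⟨0, hn⟩).im = 0 →
      c * euclNorm (symmetrizeZ n (x₁ - x₂)) * euclNorm (symmetrizeZ n (x₁ + x₂)) ≤
        euclNorm (fun k => ‖(dft (4 * n - 3)).mulVec (symmetrizeZ n x₁) k‖ ^ 2 -
          ‖(dft (4 * n - 3)).mulVec (symmetrizeZ n x₂) k‖ ^ 2) := by
  obtain ⟨cm, hcm, hlow⟩ := gFun_lower n hn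
  refine ⟨Real.sqrt cm, Real.sqrt_pos.mpr hcm, ?_⟩
  intro x₁ x₂ h1 h2
  have hm : 0 < 4 * n - 3 := by omega
  set d := x₁ - x₂ with hdd
  set sx := x₁ + x₂ with hss
  have hd0 : (d ⟨0, hn⟩).im = 0 := by
    rw [hdd, Pi.sub_apply, Complex.sub_im, h1, h2, sub_zero]
  have hs0 : (sx ⟨0, hn⟩).im = 0 := by
    rw [hss, Pi.add_apply, Complex.add_im, h1, h2, add_zero]
  have hr1 : ∀ k, ((dft (4 * n - 3)).mulVec (symmetrizeZ n x₁) k).im = 0 := fun k =>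
    dft_mulVec_real (4 * n - 3) hm _ (fun l => symmetrizeZ_conj_neg n hn x₁ h1 l) k
  have hr2 : ∀ k, ((dft (4 * n - 3)).mulVec (symmetrizeZ n x₂) k).im = 0 := fun k =>
    dft_mulVec_real (4 * n - 3) hm _ (fun l => symmetrizeZ_conj_neg n hn x₂ h2 l) k
  have hsqre : ∀ z : ℂ, z.im = 0 → ‖z‖ ^ 2 = z.re ^ 2 := by
    intro z hz
    rw [Complex.sq_norm, Complex.normSq_apply, hz]
    ring
  have e1 : ∀ k, (dft (4 * n - 3)).mulVec (symmetrizeZ n d) k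
      = (dft (4 * n - 3)).mulVec (symmetrizeZ n x₁) k
        - (dft (4 * n - 3)).mulVec (symmetrizeZ n x₂) k := by
    intro k
    rw [hdd, symmetrizeZ_sub n hn, Matrix.mulVec_sub]
    rfl
  have e2 : ∀ k, (dft (4 * n - 3)).mulVec (symmetrizeZ n sx) k
      = (dft (4 * n - 3)).mulVec (symmetrizeZ n x₁) k
        + (dft (4 * n - 3)).mulVec (symmetrizeZ n x₂) k := by
    intro k
    rw [hss, symmetrizeZ_add n hn, Matrix.mulVec_add]
    rfl
  have hpt : ∀ k : Fin (4 * n - 3),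
      (‖(dft (4 * n - 3)).mulVec (symmetrizeZ n x₁) k‖ ^ 2 -
        ‖(dft (4 * n - 3)).mulVec (symmetrizeZ n x₂) k‖ ^ 2) ^ 2
      = ‖(dft (4 * n - 3)).mulVec (symmetrizeZ n d) k‖ ^ 2 *
        ‖(dft (4 * n - 3)).mulVec (symmetrizeZ n sx) k‖ ^ 2 := by
    intro k
    rw [e1 k, e2 k, hsqre _ (hr1 k), hsqre _ (hr2 k),
      hsqre _ (by rw [Complex.sub_im, hr1 k, hr2 k, sub_zero]),
      hsqre _ (by rw [Complex.add_im, hr1 k, hr2 k, add_zero]),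
      Complex.sub_re, Complex.add_re]
    ring
  have hEN : euclNorm (fun k => ‖(dft (4 * n - 3)).mulVec (symmetrizeZ n x₁) k‖ ^ 2 -
      ‖(dft (4 * n - 3)).mulVec (symmetrizeZ n x₂) k‖ ^ 2)
      = Real.sqrt (gFun n (d, sx)) := by
    unfold euclNorm gFun
    congr 1
    refine Finset.sum_congr rfl fun k _ => ?_
    rw [Real.norm_eq_abs, sq_abs]
    exact hpt k
  rw [hEN]
  have hle := hlow d sx hd0 hs0
  have hch : Real.sqrt cm * euclNorm (symmetrizeZ n d) * euclNorm (symmetrizeZ n sx)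
      = Real.sqrt (cm * euclNorm (symmetrizeZ n d) ^ 2 * euclNorm (symmetrizeZ n sx) ^ 2) := by
    rw [Real.sqrt_mul (by positivity), Real.sqrt_mul (le_of_lt hcm),
      Real.sqrt_sq (euclNorm_nonneg _), Real.sqrt_sq (euclNorm_nonneg _)]
  rw [hch]
  exact Real.sqrt_le_sqrt hle
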